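/- Let R be a field and N ≥ 1. Then R[T_1, …, T_N] is a free module of rank N! over its subring R[e_1, …, e_N] generated by the elementary symmetric polynomials, and moreover e_1, …, e_N are algebraically independent over R. -/

import Mathlib

open MvPolynomial Polynomial Finset


lemma esymm_rec (R : Type*) [CommSemiring R] (n k : ℕ) (hk : k < n) :
    esymm (Fin (n+1)) R (k+1) =
      MvPolynomial.rename Fin.succ (esymm (Fin n) R (k+1)) +
        MvPolynomial.X 0 * MvPolynomial.rename Fin.succ (esymm (Fin n) R k) := by
  classical
  set φ : MvPolynomial (Fin n) R →+* MvPolynomial (Fin (n+1)) R :=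
    (MvPolynomial.rename (Fin.succ : Fin n → Fin (n+1))).toRingHom with hφ
  have h1 := MvPolynomial.prod_X_add_C_coeff R (Fin (n+1)) (n - k) (by simp; omega)
  rw [Fintype.card_fin] at h1
  have hnk : (n+1) - (n-k) = k + 1 := by omega
  rw [hnk] at h1
  rw [← h1, Fin.prod_univ_succ]
  have hmap : (∏ i : Fin n, (Polynomial.X +
        Polynomial.C (MvPolynomial.X (Fin.succ i) : MvPolynomial (Fin (n+1)) R))) =
      (∏ i : Fin n, (Polynomial.X +
        Polynomial.C (MvPolynomial.X i : MvPolynomial (Fin n) R))).map φ := by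
    rw [Polynomial.map_prod]
    simp [Polynomial.map_add, hφ, rename_X]
  rw [hmap]
  have hm : n - k = (n - k - 1) + 1 := by omega
  rw [add_mul, Polynomial.coeff_add, hm, Polynomial.coeff_X_mul, Polynomial.coeff_C_mul]
  rw [Polynomial.coeff_map, Polynomial.coeff_map]
  rw [MvPolynomial.prod_X_add_C_coeff R (Fin n) (n-k-1) (by simp; omega)]
  rw [MvPolynomial.prod_X_add_C_coeff R (Fin n) ((n-k-1)+1) (by simp; omega)]
  rw [Fintype.card_fin]
  have e1 : n - (n - k - 1) = k + 1 := by omega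
  have e2 : n - ((n - k - 1) + 1) = k := by omega
  rw [e1, e2]
  have : φ (esymm (Fin n) R (k+1)) = MvPolynomial.rename Fin.succ (esymm (Fin n) R (k+1)) := rfl
  rw [this]
  rfl


lemma X0_pow_rec (R : Type*) [CommRing R] (n : ℕ) :
    (MvPolynomial.X 0 : MvPolynomial (Fin (n+1)) R)^(n+1) =
      ∑ j ∈ Finset.range (n+1),
        (-1 : MvPolynomial (Fin (n+1)) R)^j * esymm (Fin (n+1)) R (j+1)
          * MvPolynomial.X 0^(n-j) := by
  classical
  set P := MvPolynomial (Fin (n+1)) R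
  have h := MvPolynomial.prod_C_add_X_eq_sum_esymm R (Fin (n+1))
  have h2 := congrArg (Polynomial.eval (-(MvPolynomial.X 0 : P))) h
  rw [Polynomial.eval_prod, Polynomial.eval_finset_sum] at h2
  simp only [Polynomial.eval_add, Polynomial.eval_mul, Polynomial.eval_pow,
    Polynomial.eval_X, Polynomial.eval_C, Fintype.card_fin] at h2
  have hzero : ∏ i : Fin (n+1), (-(MvPolynomial.X 0 : P) + MvPolynomial.X i) = 0 := by
    apply Finset.prod_eq_zero (Finset.mem_univ (0 : Fin (n+1)))
    ring
  rw [hzero] at h2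
  -- h2 : 0 = ∑ j in range (n+2), esymm _ R j * (-X0)^(n+1-j)
  have h3 : (0 : P) = ∑ j ∈ Finset.range (n+2),
      (-1 : P)^j * esymm (Fin (n+1)) R j * (MvPolynomial.X 0)^(n+1-j) := by
    have := congrArg (fun z => ((-1 : P)^(n+1)) * z) h2
    simp only [mul_zero, Finset.mul_sum] at this
    rw [this, Finset.mul_sum]
    apply Finset.sum_congr rfl
    intro j hj
    rw [Finset.mem_range] at hj
    have hj' : j ≤ n + 1 := by omega
    rw [neg_pow (MvPolynomial.X 0 : P) (n+1-j)]
    have key : ((-1 : P)^(n+1)) * ((-1)^(n+1-j)) = (-1)^j := by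
      rw [← pow_add]
      have : (n+1) + (n+1-j) = j + 2*(n+1-j) := by omega
      rw [this, pow_add, pow_mul]
      simp
    calc ((-1:P)^(n+1)) * (esymm (Fin (n+1)) R j * ((-1)^(n+1-j) * MvPolynomial.X 0^(n+1-j)))
        = (((-1:P)^(n+1)) * ((-1)^(n+1-j))) * esymm (Fin (n+1)) R j
            * MvPolynomial.X 0^(n+1-j) := by ring
      _ = (-1:P)^j * esymm (Fin (n+1)) R j * MvPolynomial.X 0^(n+1-j) := by rw [key]
  rw [Finset.sum_range_succ'] at h3
  simp only [esymm_zero, pow_zero, one_mul, mul_one, Nat.sub_zero] at h3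
  have h4 : (MvPolynomial.X 0 : P)^(n+1) =
      - ∑ j ∈ Finset.range (n+1),
        (-1 : P)^(j+1) * esymm (Fin (n+1)) R (j+1) * MvPolynomial.X 0^(n+1-(j+1)) := by
    linear_combination -h3
  rw [h4, ← Finset.sum_neg_distrib]
  apply Finset.sum_congr rfl
  intro j hj
  have : n + 1 - (j+1) = n - j := by omega
  rw [this, pow_succ]
  ring


-- helper: adjoin of (B ∪ {x}) is spanned by powers of x over B
lemma mem_span_powers {R' P' : Type*} [CommSemiring R'] [CommSemiring P'] [Algebra R' P']
    (B : Subalgebra R' P') (x : P') {z : P'}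
    (hz : z ∈ Algebra.adjoin R' (insert x (B : Set P'))) :
    z ∈ Submodule.span B (Set.range fun a : ℕ => x ^ a) := by
  set Sp := Submodule.span B (Set.range fun a : ℕ => x ^ a) with hSp
  have hone : (1 : P') ∈ Sp := Submodule.subset_span ⟨0, by simp⟩
  have hmulmem : ∀ z1 ∈ Sp, ∀ z2 ∈ Sp, z1 * z2 ∈ Sp := by
    intro z1 h1
    induction h1 using Submodule.span_induction with
    | mem u hu =>
      obtain ⟨a, rfl⟩ := hu
      intro z2 h2
      induction h2 using Submodule.span_induction with
      | mem v hv =>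
        obtain ⟨b, rfl⟩ := hv
        exact Submodule.subset_span ⟨a + b, by simp [pow_add]⟩
      | zero => simp [hSp]
      | add v w _ _ hv hw => rw [mul_add]; exact Submodule.add_mem _ hv hw
      | smul c v _ hv => rw [mul_smul_comm]; exact Submodule.smul_mem _ _ hv
    | zero => intro z2 _; simp [hSp]
    | add v w _ _ hv hw => intro z2 h2; rw [add_mul]; exact Submodule.add_mem _ (hv z2 h2) (hw z2 h2)
    | smul c v _ hv => intro z2 h2; rw [smul_mul_assoc]; exact Submodule.smul_mem _ _ (hv z2 h2)
  induction hz using Algebra.adjoin_induction with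
  | mem u hu =>
    rcases hu with rfl | hu
    · exact Submodule.subset_span ⟨1, by simp⟩
    · have : (⟨u, hu⟩ : B) • (1 : P') = u := by
        simp [Algebra.smul_def]
      rw [← this]
      exact Submodule.smul_mem _ _ hone
  | algebraMap r =>
    have : (algebraMap R' P') r = (algebraMap R' B r) • (1 : P') := by
      simp [Algebra.smul_def]
    rw [this]
    exact Submodule.smul_mem _ _ hone
  | add u v _ _ hu hv => exact Submodule.add_mem _ hu hv
  | mul u v _ _ hu hv => exact hmulmem u hu v hv

-- membership of renamed esymm in the adjoin with X 0
lemma rename_esymm_mem_adjoin (R : Type*) [CommRing R] (n : ℕ) :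
    ∀ k : ℕ, k ≤ n → (MvPolynomial.rename Fin.succ (esymm (Fin n) R k)) ∈
      Algebra.adjoin R (insert (MvPolynomial.X 0)
        ((Algebra.adjoin R (Set.range fun j : Fin (n+1) =>
          esymm (Fin (n+1)) R (j.1+1)) : Subalgebra R (MvPolynomial (Fin (n+1)) R)) :
            Set (MvPolynomial (Fin (n+1)) R))) := by
  intro k
  induction k with
  | zero =>
    intro _
    simp only [esymm_zero, map_one]
    exact Subalgebra.one_mem _
  | succ k ih =>
    intro hk
    have hrec := esymm_rec R n k (by omega)
    have : MvPolynomial.rename Fin.succ (esymm (Fin n) R (k+1)) =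
        esymm (Fin (n+1)) R (k+1) -
          MvPolynomial.X 0 * MvPolynomial.rename Fin.succ (esymm (Fin n) R k) := by
      rw [hrec]; ring
    rw [this]
    apply Subalgebra.sub_mem
    · apply Algebra.subset_adjoin
      right
      apply Algebra.subset_adjoin
      exact ⟨⟨k, by omega⟩, rfl⟩
    · apply Subalgebra.mul_mem
      · exact Algebra.subset_adjoin (Or.inl rfl)
      · exact ih (by omega)

section SpanMono
variable (R : Type*) [CommRing R]

theorem span_monomials : ∀ (n : ℕ) (p : MvPolynomial (Fin n) R),
    p ∈ Submodule.span (Algebra.adjoin R (Set.range fun k : Fin n => esymm (Fin n) R (k.1+1)))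
      {m : MvPolynomial (Fin n) R |
        ∃ d : Fin n →₀ ℕ, (∀ i : Fin n, d i + i.1 < n) ∧ m = monomial d 1} := by
  intro n
  induction n with
  | zero =>
    intro p
    obtain ⟨c, rfl⟩ := MvPolynomial.C_surjective (Fin 0) p
    have h1 : (1 : MvPolynomial (Fin 0) R) ∈
        {m : MvPolynomial (Fin 0) R |
          ∃ d : Fin 0 →₀ ℕ, (∀ i : Fin 0, d i + i.1 < 0) ∧ m = monomial d 1} := by
      refine ⟨0, fun i => i.elim0, ?_⟩
      simp
    have : (MvPolynomial.C c : MvPolynomial (Fin 0) R) =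
        (⟨MvPolynomial.C c, Subalgebra.algebraMap_mem _ c⟩ :
          (Algebra.adjoin R (Set.range fun k : Fin 0 => esymm (Fin 0) R (k.1+1)))) •
            (1 : MvPolynomial (Fin 0) R) := by
      simp [Algebra.smul_def]
    rw [this]
    exact Submodule.smul_mem _ _ (Submodule.subset_span h1)
  | succ n IH =>
    set A := Algebra.adjoin R (Set.range fun k : Fin (n+1) => esymm (Fin (n+1)) R (k.1+1))
      with hA
    set M := Submodule.span A
      {m : MvPolynomial (Fin (n+1)) R |
        ∃ d : Fin (n+1) →₀ ℕ, (∀ i : Fin (n+1), d i + i.1 < n+1) ∧ m = monomial d 1} with hM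
    -- step_aux
    have step_aux : ∀ a : ℕ, ∀ d : Fin (n+1) →₀ ℕ, d 0 = 0 →
        (∀ i : Fin n, d i.succ + i.1 + 1 < n+1) →
        (MvPolynomial.X 0 : MvPolynomial (Fin (n+1)) R)^a * monomial d 1 ∈ M := by
      intro a
      induction a using Nat.strong_induction_on with
      | _ a iha =>
        intro d h0 hd
        by_cases ha : a ≤ n
        · apply Submodule.subset_span
          refine ⟨Finsupp.single 0 a + d, ?_, ?_⟩
          · intro i
            induction i using Fin.cases with
            | zero => simp [h0]; omega
            | succ j =>
              have hne : (0 : Fin (n+1)) ≠ j.succ := (Fin.succ_ne_zero j).symm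
              have := hd j
              simp [Finsupp.single_apply, hne]
              omega
          · rw [MvPolynomial.X_pow_eq_monomial, MvPolynomial.monomial_mul, one_mul]
        · push_neg at ha
          obtain ⟨b, rfl⟩ : ∃ b, a = (n+1) + b := ⟨a - (n+1), by omega⟩
          rw [pow_add, X0_pow_rec R n, Finset.sum_mul, Finset.sum_mul]
          apply Submodule.sum_mem
          intro j hj
          rw [Finset.mem_range] at hj
          have hcoef : ((-1 : MvPolynomial (Fin (n+1)) R)^j * esymm (Fin (n+1)) R (j+1)) ∈ A := by
            apply Subalgebra.mul_mem
            · exact Subalgebra.pow_mem _ (Subalgebra.neg_mem _ (Subalgebra.one_mem _)) _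
            · exact Algebra.subset_adjoin ⟨⟨j, hj⟩, rfl⟩
          have heq : ((-1 : MvPolynomial (Fin (n+1)) R)^j * esymm (Fin (n+1)) R (j+1)
                * MvPolynomial.X 0^(n-j)) * MvPolynomial.X 0^b * monomial d 1
              = (⟨_, hcoef⟩ : A) • (MvPolynomial.X 0^((n-j)+b) * monomial d 1) := by
            rw [Algebra.smul_def]
            show _ = ((-1 : MvPolynomial (Fin (n+1)) R)^j * esymm (Fin (n+1)) R (j+1)) * _
            rw [pow_add]
            ring
          rw [heq]
          exact Submodule.smul_mem _ _ (iha ((n-j)+b) (by omega) d h0 hd)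
    have coef_mem : ∀ c ∈ Algebra.adjoin R (Set.range fun k : Fin n => esymm (Fin n) R (k.1+1)),
        MvPolynomial.rename (Fin.succ : Fin n → Fin (n+1)) c ∈
          Submodule.span A (Set.range fun a : ℕ =>
            (MvPolynomial.X 0 : MvPolynomial (Fin (n+1)) R)^a) := by
      intro c hc
      apply mem_span_powers
      have hmem : MvPolynomial.rename (Fin.succ : Fin n → Fin (n+1)) c ∈
          (Algebra.adjoin R (Set.range fun k : Fin n => esymm (Fin n) R (k.1+1))).map
            (MvPolynomial.rename (Fin.succ : Fin n → Fin (n+1))) := ⟨c, hc, rfl⟩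
      rw [AlgHom.map_adjoin] at hmem
      refine Algebra.adjoin_le ?_ hmem
      rintro _ ⟨_, ⟨k, rfl⟩, rfl⟩
      exact rename_esymm_mem_adjoin R n (k.1+1) (by omega)
    -- step_ren
    have step_ren : ∀ q : MvPolynomial (Fin n) R,
        q ∈ Submodule.span (Algebra.adjoin R (Set.range fun k : Fin n => esymm (Fin n) R (k.1+1)))
          {m : MvPolynomial (Fin n) R |
            ∃ d : Fin n →₀ ℕ, (∀ i : Fin n, d i + i.1 < n) ∧ m = monomial d 1} →
        ∀ a : ℕ, (MvPolynomial.X 0 : MvPolynomial (Fin (n+1)) R)^a *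
          MvPolynomial.rename Fin.succ q ∈ M := by
      intro q hq
      induction hq using Submodule.span_induction with
      | mem m hm =>
        intro a
        obtain ⟨d, hd, rfl⟩ := hm
        rw [rename_monomial]
        apply step_aux a
        · apply Finsupp.mapDomain_notin_range
          rintro ⟨i, hi⟩
          exact (Fin.succ_ne_zero i) hi
        · intro i
          rw [Finsupp.mapDomain_apply (Fin.succ_injective n)]
          have := hd i
          omega
      | zero => intro a; rw [map_zero, mul_zero]; exact Submodule.zero_mem _
      | add u v _ _ hu hv =>
        intro a; rw [map_add, mul_add]; exact Submodule.add_mem _ (hu a) (hv a)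
      | smul c q' hq' ih =>
        intro a
        have hcq : MvPolynomial.rename (Fin.succ : Fin n → Fin (n+1)) (c • q')
            = MvPolynomial.rename Fin.succ (c : MvPolynomial (Fin n) R) *
              MvPolynomial.rename Fin.succ q' := by
          rw [Algebra.smul_def]
          show MvPolynomial.rename _ ((c : MvPolynomial (Fin n) R) * q') = _
          rw [map_mul]
        rw [hcq]
        have hspan := coef_mem (c : MvPolynomial (Fin n) R) c.2
        have claim : ∀ z ∈ Submodule.span A (Set.range fun a : ℕ =>
            (MvPolynomial.X 0 : MvPolynomial (Fin (n+1)) R)^a),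
            ∀ a' : ℕ, (MvPolynomial.X 0 : MvPolynomial (Fin (n+1)) R)^a' *
              (z * MvPolynomial.rename Fin.succ q') ∈ M := by
          intro z hz
          induction hz using Submodule.span_induction with
          | mem u hu =>
            obtain ⟨e, rfl⟩ := hu
            intro a'
            have : (MvPolynomial.X 0 : MvPolynomial (Fin (n+1)) R)^a' *
                ((MvPolynomial.X 0)^e * MvPolynomial.rename Fin.succ q')
                = (MvPolynomial.X 0)^(a'+e) * MvPolynomial.rename Fin.succ q' := by
              rw [pow_add]; ring
            rw [this]
            exact ih (a'+e)
          | zero => intro a'; rw [zero_mul, mul_zero]; exact Submodule.zero_mem _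
          | add u v _ _ hu hv =>
            intro a'; rw [add_mul, mul_add]; exact Submodule.add_mem _ (hu a') (hv a')
          | smul c' z _ ihz =>
            intro a'
            have : (MvPolynomial.X 0 : MvPolynomial (Fin (n+1)) R)^a' *
                ((c' • z) * MvPolynomial.rename Fin.succ q')
                = c' • ((MvPolynomial.X 0)^a' * (z * MvPolynomial.rename Fin.succ q')) := by
              rw [Algebra.smul_def, Algebra.smul_def]; ring
            rw [this]
            exact Submodule.smul_mem _ _ (ihz a')
        exact claim _ hspan a
    -- main
    intro p
    rw [MvPolynomial.as_sum p]
    apply Submodule.sum_mem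
    intro d _
    have hmono : (monomial d) (MvPolynomial.coeff d p) =
        (⟨MvPolynomial.C (MvPolynomial.coeff d p), Subalgebra.algebraMap_mem _ _⟩ : A) •
          monomial d 1 := by
      rw [Algebra.smul_def]
      show _ = MvPolynomial.C (MvPolynomial.coeff d p) * _
      rw [MvPolynomial.C_mul_monomial, mul_one]
    rw [hmono]
    apply Submodule.smul_mem
    -- monomial d 1 ∈ M
    set d' : Fin n →₀ ℕ := Finsupp.equivFunOnFinite.symm (fun i : Fin n => d i.succ) with hd'
    have hdec : d = Finsupp.single 0 (d 0) + Finsupp.mapDomain Fin.succ d' := by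
      ext c
      induction c using Fin.cases with
      | zero =>
        have : Finsupp.mapDomain (Fin.succ : Fin n → Fin (n+1)) d' 0 = 0 := by
          apply Finsupp.mapDomain_notin_range
          rintro ⟨i, hi⟩
          exact (Fin.succ_ne_zero i) hi
        simp [this]
      | succ j =>
        have hne : (0 : Fin (n+1)) ≠ j.succ := (Fin.succ_ne_zero j).symm
        rw [Finsupp.add_apply, Finsupp.single_apply, if_neg hne,
          Finsupp.mapDomain_apply (Fin.succ_injective n)]
        simp [hd']
    have : (monomial d) (1 : R) = (MvPolynomial.X 0)^(d 0) *
        MvPolynomial.rename Fin.succ ((monomial d') 1) := by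
      rw [rename_monomial, MvPolynomial.X_pow_eq_monomial, MvPolynomial.monomial_mul, one_mul, ← hdec]
    rw [this]
    exact step_ren (monomial d' 1) (IH _) (d 0)
end
 SpanMono

noncomputable def Bequiv (N : ℕ) : {d : Fin N →₀ ℕ // ∀ i : Fin N, d i + i.1 < N} ≃
    (∀ i : Fin N, Fin (N - i.1)) where
  toFun α i := ⟨α.1 i, by have := α.2 i; omega⟩
  invFun f := ⟨Finsupp.equivFunOnFinite.symm (fun i => (f i).1), fun i => by
    simp only [Finsupp.coe_equivFunOnFinite_symm]
    have := (f i).2; omega⟩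
  left_inv α := by ext i; simp
  right_inv f := by ext i; simp

noncomputable instance (N : ℕ) : Fintype {d : Fin N →₀ ℕ // ∀ i : Fin N, d i + i.1 < N} :=
  Fintype.ofEquiv _ (Bequiv N).symm

lemma cardB (N : ℕ) :
    Fintype.card {d : Fin N →₀ ℕ // ∀ i : Fin N, d i + i.1 < N} = N.factorial := by
  rw [Fintype.card_congr (Bequiv N), Fintype.card_pi]
  simp only [Fintype.card_fin]
  rw [Fin.prod_univ_eq_prod_range (fun i => N - i) N]
  have := Finset.prod_range_reflect (fun j => j + 1) N
  rw [← Finset.prod_range_add_one_eq_factorial, ← this]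
  apply Finset.prod_congr rfl
  intro j hj
  rw [Finset.mem_range] at hj
  omega

section FieldPart
variable (R : Type*) [Field R] (N : ℕ)

variable (R : Type*) [Field R] (N : ℕ)

lemma fracExt {P K : Type*} [CommRing P] [IsDomain P] [Field K] [Algebra P K]
    [IsFractionRing P K] {e₁ e₂ : K ≃+* K}
    (h : ∀ p : P, e₁ (algebraMap P K p) = e₂ (algebraMap P K p)) : e₁ = e₂ := by
  have h2 : e₁.toRingHom = e₂.toRingHom := by
    apply IsLocalization.ringHom_ext (nonZeroDivisors P)
    ext p
    exact h p
  exact RingEquiv.ext fun x => RingHom.congr_fun h2 x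

noncomputable def permAut (σ : Equiv.Perm (Fin N)) :
    RingAut (FractionRing (MvPolynomial (Fin N) R)) :=
  IsFractionRing.ringEquivOfRingEquiv ((MvPolynomial.renameEquiv R σ).toRingEquiv)

lemma permAut_algebraMap (σ : Equiv.Perm (Fin N)) (p : MvPolynomial (Fin N) R) :
    permAut R N σ (algebraMap (MvPolynomial (Fin N) R)
      (FractionRing (MvPolynomial (Fin N) R)) p) =
    algebraMap (MvPolynomial (Fin N) R) (FractionRing (MvPolynomial (Fin N) R))
      (MvPolynomial.rename σ p) := by
  unfold permAut
  rw [IsFractionRing.ringEquivOfRingEquiv_algebraMap]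
  rfl

noncomputable def permHom :
    Equiv.Perm (Fin N) →* RingAut (FractionRing (MvPolynomial (Fin N) R)) where
  toFun := permAut R N
  map_one' := by
    apply fracExt (P := MvPolynomial (Fin N) R)
    intro p
    rw [permAut_algebraMap]
    show _ = algebraMap _ _ p
    congr 1
    have : ⇑(1 : Equiv.Perm (Fin N)) = id := rfl
    rw [this, MvPolynomial.rename_id, AlgHom.id_apply]
  map_mul' σ τ := by
    apply fracExt (P := MvPolynomial (Fin N) R)
    intro p
    rw [permAut_algebraMap]
    show _ = permAut R N σ (permAut R N τ (algebraMap _ _ p))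
    rw [permAut_algebraMap, permAut_algebraMap, MvPolynomial.rename_rename]
    rfl

lemma permHom_algebraMap (σ : Equiv.Perm (Fin N)) (p : MvPolynomial (Fin N) R) :
    permHom R N σ (algebraMap (MvPolynomial (Fin N) R)
      (FractionRing (MvPolynomial (Fin N) R)) p) =
    algebraMap (MvPolynomial (Fin N) R) (FractionRing (MvPolynomial (Fin N) R))
      (MvPolynomial.rename σ p) := permAut_algebraMap R N σ p

end FieldPart

set_option maxHeartbeats 1000000
set_option synthInstance.maxHeartbeats 400000

noncomputable instance permAction (R : Type*) [Field R] (N : ℕ) :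
    MulSemiringAction (Equiv.Perm (Fin N)) (FractionRing (MvPolynomial (Fin N) R)) :=
  MulSemiringAction.compHom _ (permHom R N)

lemma perm_smul_def (R : Type*) [Field R] (N : ℕ) (σ : Equiv.Perm (Fin N))
    (x : FractionRing (MvPolynomial (Fin N) R)) : σ • x = permHom R N σ x := rfl

instance permFaithful (R : Type*) [Field R] (N : ℕ) :
    FaithfulSMul (Equiv.Perm (Fin N)) (FractionRing (MvPolynomial (Fin N) R)) := by
  constructor
  intro σ τ h
  apply Equiv.ext
  intro i
  have h2 := h (algebraMap (MvPolynomial (Fin N) R) _ (MvPolynomial.X i))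
  rw [perm_smul_def, perm_smul_def, permHom_algebraMap, permHom_algebraMap,
    MvPolynomial.rename_X, MvPolynomial.rename_X] at h2
  exact MvPolynomial.X_injective (IsFractionRing.injective (MvPolynomial (Fin N) R) _ h2)

theorem exists_basis (R : Type*) [Field R] (N : ℕ) :
    Nonempty (Module.Basis {d : Fin N →₀ ℕ // ∀ i : Fin N, d i + i.1 < N}
      (Algebra.adjoin R (Set.range fun k : Fin N => esymm (Fin N) R (k.1 + 1)))
      (MvPolynomial (Fin N) R)) := by
  classical
  set A := Algebra.adjoin R (Set.range fun k : Fin N => esymm (Fin N) R (k.1 + 1)) with hA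
  set φ := algebraMap (MvPolynomial (Fin N) R) (FractionRing (MvPolynomial (Fin N) R)) with hφ
  have hφinj : Function.Injective φ := IsFractionRing.injective _ _
  set L := FixedPoints.subfield (Equiv.Perm (Fin N))
    (FractionRing (MvPolynomial (Fin N) R)) with hL
  have hLmem : ∀ p : MvPolynomial (Fin N) R, p.IsSymmetric → φ p ∈ L := by
    intro p hp
    show φ p ∈ MulAction.fixedPoints _ _
    intro σ
    rw [perm_smul_def, permHom_algebraMap, hp σ]
  have hAle : A ≤ symmetricSubalgebra (Fin N) R := by
    apply Algebra.adjoin_le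
    rintro _ ⟨k, rfl⟩
    exact esymm_isSymmetric _ _ _
  set b : {d : Fin N →₀ ℕ // ∀ i : Fin N, d i + i.1 < N} → MvPolynomial (Fin N) R :=
    fun α => monomial α.1 1 with hb
  set β : {d : Fin N →₀ ℕ // ∀ i : Fin N, d i + i.1 < N} →
    FractionRing (MvPolynomial (Fin N) R) := fun α => φ (b α) with hβ
  have hset : {m : MvPolynomial (Fin N) R |
      ∃ d : Fin N →₀ ℕ, (∀ i : Fin N, d i + i.1 < N) ∧ m = monomial d 1} = Set.range b := by
    ext m
    constructor
    · rintro ⟨d, hd, rfl⟩; exact ⟨⟨d, hd⟩, rfl⟩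
    · rintro ⟨⟨d, hd⟩, rfl⟩; exact ⟨d, hd, rfl⟩
  have hspanA : ⊤ ≤ Submodule.span A (Set.range b) := by
    intro p _
    have := span_monomials R N p
    rwa [hset] at this
  have hφspan : ∀ p : MvPolynomial (Fin N) R, p ∈ Submodule.span A (Set.range b) →
      φ p ∈ Submodule.span L (Set.range β) := by
    intro p hp
    induction hp using Submodule.span_induction with
    | mem u hu => obtain ⟨α, rfl⟩ := hu; exact Submodule.subset_span ⟨α, rfl⟩
    | zero => rw [map_zero]; exact Submodule.zero_mem _
    | add u v _ _ hu hv => rw [map_add]; exact Submodule.add_mem _ hu hv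
    | smul a u _ ih =>
      have : a • u = (a : MvPolynomial (Fin N) R) * u := rfl
      rw [this, map_mul]
      have ha : φ (a : MvPolynomial (Fin N) R) ∈ L := hLmem _ (hAle a.2)
      have : φ (a : MvPolynomial (Fin N) R) * φ u = (⟨_, ha⟩ : L) • φ u := rfl
      rw [this]
      exact Submodule.smul_mem _ _ ih
  have hKspan : ⊤ ≤ Submodule.span L (Set.range β) := by
    rintro x -
    obtain ⟨p, q, hq, rfl⟩ := IsFractionRing.div_surjective (A := MvPolynomial (Fin N) R) x
    have hq0 : q ≠ 0 := nonZeroDivisors.ne_zero hq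
    set Q := ∏ σ : Equiv.Perm (Fin N), MvPolynomial.rename ⇑σ q with hQ
    have hrne : ∀ σ : Equiv.Perm (Fin N), MvPolynomial.rename ⇑σ q ≠ 0 := by
      intro σ hzero
      exact hq0 (MvPolynomial.rename_injective _ σ.injective (by simpa using hzero))
    have hQsym : Q.IsSymmetric := by
      intro τ
      rw [hQ, map_prod]
      refine Fintype.prod_equiv (Equiv.mulLeft τ) _ _ ?_
      intro σ
      rw [MvPolynomial.rename_rename]
      rfl
    have hQ0 : Q ≠ 0 := Finset.prod_ne_zero_iff.mpr fun σ _ => hrne σ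
    set Q' := ∏ σ ∈ Finset.univ.erase (1 : Equiv.Perm (Fin N)), MvPolynomial.rename ⇑σ q
      with hQ'
    have hsplit : Q = q * Q' := by
      rw [hQ, ← Finset.mul_prod_erase Finset.univ _
        (Finset.mem_univ (1 : Equiv.Perm (Fin N))), ← hQ']
      congr 1
      show MvPolynomial.rename (⇑(1 : Equiv.Perm (Fin N))) q = q
      have : ⇑(1 : Equiv.Perm (Fin N)) = id := rfl
      rw [this, MvPolynomial.rename_id, AlgHom.id_apply]
    have hQ'0 : Q' ≠ 0 := Finset.prod_ne_zero_iff.mpr fun σ _ => hrne σ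
    have hqK : φ q ≠ 0 := fun h => hq0 (hφinj (by simpa using h))
    have hQ'K : φ Q' ≠ 0 := fun h => hQ'0 (hφinj (by simpa using h))
    have hQK : φ Q ≠ 0 := fun h => hQ0 (hφinj (by simpa using h))
    have hx : φ p / φ q = (φ Q)⁻¹ * φ (p * Q') := by
      rw [hsplit] at hQK ⊢
      rw [map_mul, map_mul]
      field_simp
    rw [hx]
    have hQL : (φ Q)⁻¹ ∈ L := L.inv_mem (hLmem Q hQsym)
    have : (φ Q)⁻¹ * φ (p * Q') = (⟨_, hQL⟩ : L) • φ (p * Q') := rfl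
    rw [this]
    exact Submodule.smul_mem _ _ (hφspan _ (hspanA (Submodule.mem_top)))
  have hfin : Module.finrank L (FractionRing (MvPolynomial (Fin N) R)) = N.factorial := by
    rw [hL, FixedPoints.finrank_eq_card]
    simp [Fintype.card_perm]
  have li : LinearIndependent L β :=
    linearIndependent_of_top_le_span_of_card_eq_finrank hKspan (by rw [cardB, hfin])
  have liA : LinearIndependent A b := by
    rw [Fintype.linearIndependent_iff]
    intro g hg
    have hsum : ∑ α, (⟨φ (g α : MvPolynomial (Fin N) R), hLmem _ (hAle (g α).2)⟩ : L) • β α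
        = 0 := by
      have := congrArg φ hg
      rw [map_sum, map_zero] at this
      rw [← this]
      apply Finset.sum_congr rfl
      intro α _
      show (⟨φ (g α : MvPolynomial (Fin N) R), _⟩ : L) • β α = φ (g α • b α)
      have h1 : g α • b α = (g α : MvPolynomial (Fin N) R) * b α := rfl
      rw [h1, map_mul]
      rfl
    have hzero := Fintype.linearIndependent_iff.mp li _ hsum
    intro α
    have h2 := congrArg Subtype.val (hzero α)
    simp only at h2
    have h3 : (g α : MvPolynomial (Fin N) R) = 0 := hφinj (by simpa using h2)
    exact Subtype.ext h3
  exact ⟨Module.Basis.mk liA hspanA⟩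


/-- over a field `R`, the polynomial ring `R[T_1,…,T_N]` is a free
module of rank `N!` over the subring generated by the elementary symmetric
polynomials, which are algebraically independent over `R`. -/
theorem stmt19 (R : Type*) [Field R] (N : ℕ) (hN : 1 ≤ N) :
    Nonempty (Module.Basis (Fin (Nat.factorial N))
      (Algebra.adjoin R (Set.range fun k : Fin N => MvPolynomial.esymm (Fin N) R (k.1 + 1)))
      (MvPolynomial (Fin N) R)) ∧
    AlgebraicIndependent R (fun k : Fin N => MvPolynomial.esymm (Fin N) R (k.1 + 1)) := by
  constructor
  · obtain ⟨bs⟩ := exists_basis R N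
    exact ⟨bs.reindex (Fintype.equivFinOfCardEq (cardB N))⟩
  · have h := MvPolynomial.esymmAlgHom_fin_injective (R := R) (m := N) (n := N) le_rfl
    rw [AlgebraicIndependent]
    have heq : (MvPolynomial.aeval fun k : Fin N => esymm (Fin N) R (k.1+1)) =
        ((symmetricSubalgebra (Fin N) R).val).comp (esymmAlgHom (Fin N) R N) := by
      ext i
      simp [esymmAlgHom]
    rw [heq]
    exact (Subtype.val_injective).comp h
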